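/- arXiv:1509.04538 — 4 statements merged into one kernel-verified Lean document; each statement's English description precedes it below -/
import Mathlib

section
/- Let A be an n×n real matrix with nonzero rows a₁ᵀ,…,aₙᵀ, let b ∈ ℝⁿ, let G be an undirected simple graph on n vertices with Laplacian L, let Pᵢ = I − aᵢaᵢᵀ/(aᵢᵀaᵢ), let P = diag(P₁,…,Pₙ) be the n²×n² block-diagonal matrix and L̄ = L ⊗ Iₙ. If the initial vector 𝒳₀ = (x₁(0),…,xₙ(0)) ∈ (ℝⁿ)ⁿ satisfies aᵢᵀxᵢ(0) = bᵢ for all i, then for every t ∈ ℝ the vector 𝒳(t) = exp(−t·P L̄)·𝒳₀, with blocks x₁(t),…,xₙ(t), satisfies aᵢᵀxᵢ(t) = bᵢ for all i. -/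
open Matrix
open scoped Kronecker

/-- The orthogonal projection `Pᵢ = I - aᵢaᵢᵀ/(aᵢᵀaᵢ)` onto the hyperplane `{z : aᵢᵀz = 0}`. -/
noncomputable def projMat {n : ℕ} (a : Fin n → ℝ) : Matrix (Fin n) (Fin n) ℝ :=
  1 - (a ⬝ᵥ a)⁻¹ • vecMulVec a a

/-- The block-diagonal matrix `P = diag(P₁,…,Pₘ)`, acting on `(ℝⁿ)ᵐ ≅ ℝ^{mn}`
(indexed by pairs `(block, coordinate)`). -/
noncomputable def blockP {m n : ℕ} (a : Fin m → Fin n → ℝ) :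
    Matrix (Fin m × Fin n) (Fin m × Fin n) ℝ :=
  Matrix.of fun p q => if p.1 = q.1 then projMat (a p.1) p.2 q.2 else 0

section Aux

attribute [local instance] Matrix.linftyOpNormedRing Matrix.linftyOpNormedAlgebra

/-- If `v` is in the kernel of `M`, then `exp M` fixes `v`. -/
lemma exp_mulVec_of_mulVec_eq_zero {m : Type*} [Fintype m] [DecidableEq m]
    (M : Matrix m m ℝ) (v : m → ℝ) (h : M *ᵥ v = 0) :
    NormedSpace.exp M *ᵥ v = v := by
  have hpow : ∀ k : ℕ, M ^ k *ᵥ v = if k = 0 then v else 0 := by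
    intro k
    cases k with
    | zero => simp
    | succ k => rw [pow_succ, ← Matrix.mulVec_mulVec, h, Matrix.mulVec_zero]; simp
  have hsum : Summable fun k : ℕ => ((Nat.factorial k : ℝ))⁻¹ • M ^ k :=
    NormedSpace.expSeries_summable' (𝕂 := ℝ) M
  -- mulVec as a continuous linear map in the matrix argument
  let f : Matrix m m ℝ →ₗ[ℝ] (m → ℝ) :=
    { toFun := fun N => N *ᵥ v
      map_add' := fun N₁ N₂ => Matrix.add_mulVec N₁ N₂ v
      map_smul' := fun c N => Matrix.smul_mulVec c N v }
  have hc : Continuous f := LinearMap.continuous_of_finiteDimensional f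
  let F : Matrix m m ℝ →L[ℝ] (m → ℝ) := ⟨f, hc⟩
  have key : NormedSpace.exp M *ᵥ v
      = ∑' k : ℕ, ((Nat.factorial k : ℝ))⁻¹ • (M ^ k *ᵥ v) := by
    rw [NormedSpace.exp_eq_tsum (𝕂 := ℝ)]
    have h2 := (hsum.hasSum.mapL F).tsum_eq
    simpa [F, f, Matrix.smul_mulVec] using h2.symm
  rw [key, tsum_eq_single 0]
  · simp
  · intro k hk; simp [hpow, hk]

end Aux


lemma vecMul_projMat {n : ℕ} (a : Fin n → ℝ) (ha : a ≠ 0) : a ᵥ* projMat a = 0 := by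
  have hd : a ⬝ᵥ a ≠ 0 := fun h => ha ((dotProduct_self_eq_zero).mp h)
  funext j
  have e1 : (a ᵥ* projMat a) j
      = ∑ k, a k * ((if k = j then (1:ℝ) else 0) - (a ⬝ᵥ a)⁻¹ * (a k * a j)) := by
    simp [Matrix.vecMul, dotProduct, projMat, Matrix.sub_apply, Matrix.one_apply,
      Matrix.smul_apply, vecMulVec_apply, smul_eq_mul]
  have e2 : ∑ k, a k * ((a ⬝ᵥ a)⁻¹ * (a k * a j)) = (a ⬝ᵥ a)⁻¹ * ∑ k, a k * (a k * a j) := by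
    rw [Finset.mul_sum]; exact Finset.sum_congr rfl fun k _ => by ring
  have e3 : ∑ k, a k * (a k * a j) = (a ⬝ᵥ a) * a j := by
    simp [dotProduct, Finset.sum_mul, mul_assoc]
  have : (a ᵥ* projMat a) j = 0 := by
    rw [e1]; simp only [mul_sub]; rw [Finset.sum_sub_distrib, e2, e3, inv_mul_cancel_left₀ hd]
    simp [mul_ite, Finset.sum_ite_eq']
  simpa using this

theorem flow_stays_on_manifold
    {n : ℕ} (A : Matrix (Fin n) (Fin n) ℝ) (b : Fin n → ℝ)
    (hrows : ∀ i, A i ≠ 0)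
    (G : SimpleGraph (Fin n)) [DecidableRel G.Adj]
    (X0 : Fin n × Fin n → ℝ)
    (hX0 : ∀ i, A i ⬝ᵥ (fun k => X0 (i, k)) = b i)
    (t : ℝ) :
    ∀ i, A i ⬝ᵥ (fun k =>
      (NormedSpace.exp
          ((-t) • (blockP (fun i => A i) * (G.lapMatrix ℝ ⊗ₖ (1 : Matrix (Fin n) (Fin n) ℝ))))
        *ᵥ X0) (i, k)) = b i := by
  intro i
  set N : Matrix (Fin n × Fin n) (Fin n × Fin n) ℝ :=
    (-t) • (blockP (fun i => A i) * (G.lapMatrix ℝ ⊗ₖ (1 : Matrix (Fin n) (Fin n) ℝ))) with hN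
  set v : Fin n × Fin n → ℝ := fun p => if p.1 = i then A i p.2 else 0 with hv
  have hdot : ∀ X : Fin n × Fin n → ℝ, A i ⬝ᵥ (fun k => X (i, k)) = v ⬝ᵥ X := by
    intro X
    simp [hv, dotProduct, Fintype.sum_prod_type, ite_mul, Finset.sum_ite_eq']
  have hvP : v ᵥ* blockP (fun i => A i) = 0 := by
    funext q
    have h0 := congrFun (vecMul_projMat (A i) (hrows i)) q.2
    simp only [Matrix.vecMul, dotProduct, Pi.zero_apply] at h0 ⊢
    rw [Fintype.sum_prod_type]
    rw [Finset.sum_eq_single i]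
    · by_cases hq : i = q.1
      · subst hq
        simpa [hv, blockP] using h0
      · simp [hv, blockP, hq]
    · intro j _ hj
      simp [hv, hj]
    · simp
  have hexp : v ᵥ* NormedSpace.exp N = v := by
    have h1 : Nᵀ *ᵥ v = 0 := by
      rw [hN, Matrix.transpose_smul, Matrix.transpose_mul, Matrix.smul_mulVec,
        ← Matrix.mulVec_mulVec, Matrix.mulVec_transpose, Matrix.mulVec_transpose, hvP,
        Matrix.zero_vecMul, smul_zero]
    have h2 := exp_mulVec_of_mulVec_eq_zero Nᵀ v h1
    rwa [Matrix.exp_transpose, Matrix.mulVec_transpose] at h2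
  rw [hdot, Matrix.dotProduct_mulVec, hexp, ← hdot, hX0]
end

section
/- Let A be an invertible n×n real matrix with rows a₁ᵀ,…,aₙᵀ, let b ∈ ℝⁿ, and let x* = A⁻¹b. Let G be a connected undirected simple graph on n vertices with Laplacian L, let Pᵢ = I − aᵢaᵢᵀ/(aᵢᵀaᵢ), P = diag(P₁,…,Pₙ), and L̄ = L ⊗ Iₙ. Then for every initial vector 𝒳₀ = (x₁(0),…,xₙ(0)) ∈ (ℝⁿ)ⁿ with aᵢᵀxᵢ(0) = bᵢ for all i, there exist constants C ≥ 0 and c > 0 such that for all t ≥ 0, ‖exp(−t·P L̄)·𝒳₀ − (x*,x*,…,x*)‖ ≤ C·exp(−c·t); in particular each block xᵢ(t) of exp(−t·P L̄)·𝒳₀ converges exponentially fast to the solution x* of Ax = b. -/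
open Matrix
open scoped Kronecker

open NormedSpace

section Aux

variable {I : Type*} [Fintype I] [DecidableEq I]

lemma exp_mulVec_congr (M M' : Matrix I I ℝ) (v : I → ℝ)
    (h : ∀ k : ℕ, M ^ k *ᵥ v = M' ^ k *ᵥ v) :
    exp M *ᵥ v = exp M' *ᵥ v := by
  letI : NormedRing (Matrix I I ℝ) := Matrix.linftyOpNormedRing
  letI : NormedAlgebra ℝ (Matrix I I ℝ) := Matrix.linftyOpNormedAlgebra
  let φ : Matrix I I ℝ →ₗ[ℝ] (I → ℝ) :=
    { toFun := fun N => N *ᵥ v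
      map_add' := fun N₁ N₂ => Matrix.add_mulVec _ _ _
      map_smul' := fun c N => Matrix.smul_mulVec c N v }
  have key : ∀ N : Matrix I I ℝ, exp N *ᵥ v
      = ∑' k : ℕ, ((Nat.factorial k : ℝ))⁻¹ • (N ^ k *ᵥ v) := by
    intro N
    have hsum : Summable fun k : ℕ => ((Nat.factorial k : ℝ))⁻¹ • N ^ k := expSeries_summable' N
    have := (φ.toContinuousLinearMap).map_tsum hsum
    rw [exp_eq_tsum ℝ]
    simpa [φ] using this
  rw [key, key]
  exact tsum_congr fun k => by rw [h k]

/-- exponential decay bound for `exp (-t • S) *ᵥ y` when `S` is PSD and `y ⟂ ker S`. -/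
lemma decay_bound {S : Matrix I I ℝ} (hS : S.PosSemidef) (y : I → ℝ)
    (hy : ∀ u : I → ℝ, S *ᵥ u = 0 → u ⬝ᵥ y = 0) :
    ∃ C c : ℝ, 0 ≤ C ∧ 0 < c ∧ ∀ t : ℝ, 0 ≤ t → ∀ p : I,
      |(exp ((-t) • S) *ᵥ y) p| ≤ C * Real.exp (-c * t) := by
  classical
  have hH : S.IsHermitian := hS.1
  set B := hH.eigenvectorBasis with hB
  set μ := hH.eigenvalues with hμ
  set U : Matrix I I ℝ := (hH.eigenvectorUnitary : Matrix I I ℝ) with hUdef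
  have hU2 : U * star U = 1 := Matrix.mem_unitaryGroup_iff.mp hH.eigenvectorUnitary.2
  have hU1 : star U * U = 1 := Matrix.mem_unitaryGroup_iff'.mp hH.eigenvectorUnitary.2
  have hUunit : IsUnit U := (Matrix.isUnit_iff_isUnit_det U).mpr (Matrix.isUnit_det_of_right_inverse hU2)
  have hUinv : U⁻¹ = star U := Matrix.inv_eq_right_inv hU2
  have hsUT : star U = Uᵀ := by
    ext i j; simp [Matrix.star_apply]
  have hspec : S = U * Matrix.diagonal μ * star U := by
    have := hH.spectral_theorem
    simpa [hUdef, hμ] using this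
  -- the constant c
  set T : Finset I := Finset.univ.filter fun i => 0 < μ i with hT
  set c : ℝ := if hT : T.Nonempty then T.inf' hT μ else 1 with hc
  have hc0 : 0 < c := by
    rw [hc]
    split_ifs with hne
    · rw [Finset.lt_inf'_iff]
      intro i hi
      exact (Finset.mem_filter.mp hi).2
    · exact one_pos
  have hcle : ∀ i, μ i ≠ 0 → c ≤ μ i := by
    intro i hi
    have hpos : 0 < μ i := lt_of_le_of_ne (hS.eigenvalues_nonneg i) (Ne.symm hi)
    have hmem : i ∈ T := Finset.mem_filter.mpr ⟨Finset.mem_univ _, hpos⟩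
    rw [hc, dif_pos ⟨i, hmem⟩]
    exact Finset.inf'_le μ hmem
  -- preliminary facts
  have hdot : ∀ (V : Matrix I I ℝ), Vᵀ * V = 1 → ∀ v : I → ℝ,
      (V *ᵥ v) ⬝ᵥ (V *ᵥ v) = v ⬝ᵥ v := by
    intro V hV v
    rw [Matrix.dotProduct_mulVec, ← Matrix.vecMul_transpose, Matrix.vecMul_vecMul, hV,
      Matrix.vecMul_one]
  set z : I → ℝ := star U *ᵥ y with hz
  have hzz : z ⬝ᵥ z = y ⬝ᵥ y := by
    rw [hz, hsUT]
    apply hdot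
    rw [Matrix.transpose_transpose, ← hsUT, hU2]
  have hz0 : ∀ i, μ i = 0 → z i = 0 := by
    intro i hi
    have he : S *ᵥ ⇑(B i) = 0 := by
      rw [hB, hH.mulVec_eigenvectorBasis i, ← hμ, hi, zero_smul]
    have h0 := hy _ he
    have : z i = ⇑(B i) ⬝ᵥ y := by
      rw [hz]
      simp [Matrix.mulVec, dotProduct, Matrix.star_apply, hUdef, hB]
    rw [this, h0]
  have hynn : (0:ℝ) ≤ y ⬝ᵥ y := Finset.sum_nonneg fun j _ => mul_self_nonneg _
  refine ⟨Real.sqrt (y ⬝ᵥ y), c, Real.sqrt_nonneg _, hc0, ?_⟩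
  intro t ht p
  -- the exponential
  have h1 : (-t) • S = U * Matrix.diagonal (fun i => -t * μ i) * U⁻¹ := by
    rw [hUinv]
    have : Matrix.diagonal (fun i => -t * μ i) = (-t) • Matrix.diagonal μ := by
      rw [← Matrix.diagonal_smul]
      rfl
    rw [this, hspec]
    simp only [Matrix.mul_smul, Matrix.smul_mul]
  have hexp : exp ((-t) • S) = U * Matrix.diagonal (fun i => Real.exp (-t * μ i)) * star U := by
    rw [h1, Matrix.exp_conj U _ hUunit, hUinv]
    congr 2
    rw [Matrix.exp_diagonal]
    funext i
    rw [Pi.exp_def, ← Real.exp_eq_exp_ℝ]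
  set q : I → ℝ := fun i => Real.exp (-t * μ i) * z i with hq
  have hw : exp ((-t) • S) *ᵥ y = U *ᵥ q := by
    have hdiag : (Matrix.diagonal fun i => Real.exp (-t * μ i)) *ᵥ z = q := by
      funext i; rw [Matrix.mulVec_diagonal]
    rw [hexp, ← Matrix.mulVec_mulVec, ← Matrix.mulVec_mulVec, ← hz, hdiag]
  have hsq : ∀ w : I → ℝ, w p ^ 2 ≤ w ⬝ᵥ w := by
    intro w
    have h := Finset.single_le_sum (f := fun j => w j * w j)
      (fun j _ => mul_self_nonneg _) (Finset.mem_univ p)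
    rw [dotProduct]
    nlinarith [h]
  have hE : (0:ℝ) < Real.exp (-c * t) := Real.exp_pos _
  have h2 : q ⬝ᵥ q ≤ Real.exp (-c * t) ^ 2 * (z ⬝ᵥ z) := by
    rw [dotProduct, dotProduct, Finset.mul_sum]
    apply Finset.sum_le_sum
    intro i _
    by_cases hzi : z i = 0
    · simp [hq, hzi]
    · have hμi : μ i ≠ 0 := fun h => hzi (hz0 i h)
      have hcμ : c ≤ μ i := hcle i hμi
      have hle : -t * μ i ≤ -c * t := by nlinarith
      have he1 : Real.exp (-t * μ i) ≤ Real.exp (-c * t) := Real.exp_le_exp.mpr hle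
      have he0 : (0:ℝ) ≤ Real.exp (-t * μ i) := (Real.exp_pos _).le
      have hz2 : (0:ℝ) ≤ z i * z i := mul_self_nonneg _
      simp only [hq]
      have hee : Real.exp (-t * μ i) * Real.exp (-t * μ i)
          ≤ Real.exp (-c * t) * Real.exp (-c * t) := mul_le_mul he1 he1 he0 hE.le
      nlinarith [mul_le_mul_of_nonneg_right hee hz2]
  have hkey : (exp ((-t) • S) *ᵥ y) p ^ 2
      ≤ (Real.sqrt (y ⬝ᵥ y) * Real.exp (-c * t)) ^ 2 := by
    have e1 : (exp ((-t) • S) *ᵥ y) p ^ 2 ≤ q ⬝ᵥ q := by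
      rw [hw, ← hdot U (by rw [← hsUT, hU1]) q]
      exact hsq _
    have e2 : q ⬝ᵥ q ≤ Real.exp (-c * t) ^ 2 * (y ⬝ᵥ y) := by
      rw [← hzz]; exact h2
    have e3 : Real.exp (-c * t) ^ 2 * (y ⬝ᵥ y)
        = (Real.sqrt (y ⬝ᵥ y) * Real.exp (-c * t)) ^ 2 := by
      rw [mul_pow, Real.sq_sqrt hynn]; ring
    linarith
  have := Real.sqrt_le_sqrt hkey
  rwa [Real.sqrt_sq_eq_abs, Real.sqrt_sq (by positivity)] at this

end Aux


section ProjLemmas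

variable {n : ℕ} (a : Fin n → ℝ)

lemma vecMulVec_mulVec (y : Fin n → ℝ) : vecMulVec a a *ᵥ y = (a ⬝ᵥ y) • a := by
  funext k
  simp [Matrix.mulVec, vecMulVec_apply, dotProduct, Finset.mul_sum, mul_comm, mul_assoc,
    mul_left_comm]

lemma projMat_mulVec (y : Fin n → ℝ) :
    projMat a *ᵥ y = y - ((a ⬝ᵥ a)⁻¹ * (a ⬝ᵥ y)) • a := by
  rw [projMat, Matrix.sub_mulVec, Matrix.one_mulVec, Matrix.smul_mulVec,
    vecMulVec_mulVec, smul_smul]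

lemma projMat_mulVec_of_orth {y : Fin n → ℝ} (h : a ⬝ᵥ y = 0) : projMat a *ᵥ y = y := by
  rw [projMat_mulVec, h, mul_zero, zero_smul, sub_zero]

lemma dotProduct_projMat_mulVec (h : a ⬝ᵥ a ≠ 0) (y : Fin n → ℝ) :
    a ⬝ᵥ (projMat a *ᵥ y) = 0 := by
  rw [projMat_mulVec, dotProduct_sub, dotProduct_smul, smul_eq_mul]
  field_simp
  ring

lemma projMat_transpose : (projMat a)ᵀ = projMat a := by
  rw [projMat, Matrix.transpose_sub, Matrix.transpose_one, Matrix.transpose_smul]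
  congr 1
  ext i j
  simp [vecMulVec_apply, mul_comm]

lemma projMat_mul_projMat (h : a ⬝ᵥ a ≠ 0) : projMat a * projMat a = projMat a := by
  have hN : vecMulVec a a * vecMulVec a a = (a ⬝ᵥ a) • vecMulVec a a := by
    ext i j
    simp [Matrix.mul_apply, vecMulVec_apply, dotProduct, Finset.mul_sum, Finset.sum_mul]
    apply Finset.sum_congr rfl
    intro k _
    ring
  rw [projMat, mul_sub, sub_mul, sub_mul]
  simp only [mul_one, one_mul, smul_mul_assoc, mul_smul_comm, hN, smul_smul]
  have : (a ⬝ᵥ a)⁻¹ * ((a ⬝ᵥ a)⁻¹ * (a ⬝ᵥ a)) = (a ⬝ᵥ a)⁻¹ := by field_simp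
  rw [this]
  abel

end ProjLemmas

section BlockLemmas

variable {m n : ℕ} (a : Fin m → Fin n → ℝ)

lemma blockP_mulVec (w : Fin m × Fin n → ℝ) (p : Fin m × Fin n) :
    (blockP a *ᵥ w) p = (projMat (a p.1) *ᵥ fun k => w (p.1, k)) p.2 := by
  rcases p with ⟨i, k⟩
  simp only [blockP, Matrix.mulVec, dotProduct, Fintype.sum_prod_type, Matrix.of_apply]
  rw [Finset.sum_eq_single i]
  · simp
  · intro j _ hj
    simp [Ne.symm hj]
  · simp

lemma blockP_transpose : (blockP a)ᵀ = blockP a := by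
  ext ⟨i, k⟩ ⟨j, l⟩
  simp only [Matrix.transpose_apply, blockP, Matrix.of_apply]
  by_cases h : i = j
  · subst h
    simp only [if_pos rfl]
    exact (congrFun (congrFun (projMat_transpose (a i)) l) k).symm
  · simp [h, Ne.symm h]

lemma blockP_mul_blockP (h : ∀ i, a i ⬝ᵥ a i ≠ 0) : blockP a * blockP a = blockP a := by
  ext ⟨i, k⟩ ⟨j, l⟩
  simp only [Matrix.mul_apply, blockP, Matrix.of_apply, Fintype.sum_prod_type]
  rw [Finset.sum_eq_single i]
  · by_cases hij : i = j
    · subst hij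
      simp only [if_pos rfl, eq_self_iff_true, if_true]
      have := congrFun (congrFun (projMat_mul_projMat (a i) (h i)) k) l
      rw [← this, Matrix.mul_apply]
    · simp [hij]
  · intro x _ hx
    simp [Ne.symm hx]
  · simp

section Kron
variable {n : ℕ} (G : SimpleGraph (Fin n)) [DecidableRel G.Adj]

lemma lapKron_posSemidef :
    ((G.lapMatrix ℝ ⊗ₖ (1 : Matrix (Fin n) (Fin n) ℝ))).PosSemidef := by
  classical
  have hLsym : ∀ i j : Fin n, G.lapMatrix ℝ j i = G.lapMatrix ℝ i j := by
    intro i j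
    have h := G.isSymm_lapMatrix (R := ℝ)
    calc G.lapMatrix ℝ j i = (G.lapMatrix ℝ)ᵀ i j := rfl
    _ = G.lapMatrix ℝ i j := by rw [h]
  refine Matrix.PosSemidef.of_dotProduct_mulVec_nonneg ?_ ?_
  · ext ⟨i, k⟩ ⟨j, l⟩
    simp only [Matrix.conjTranspose_apply, Matrix.kroneckerMap_apply, star_trivial,
      Matrix.one_apply, hLsym]
    by_cases h : k = l
    · subst h; simp
    · simp [h, Ne.symm h]
  · intro x
    have key : star x ⬝ᵥ ((G.lapMatrix ℝ ⊗ₖ (1 : Matrix (Fin n) (Fin n) ℝ)) *ᵥ x)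
        = ∑ k, (fun i => x (i, k)) ⬝ᵥ (G.lapMatrix ℝ *ᵥ fun i => x (i, k)) := by
      simp only [dotProduct, Matrix.mulVec, star_trivial, Fintype.sum_prod_type,
        Matrix.kroneckerMap_apply, Matrix.one_apply, mul_ite, mul_one, mul_zero, ite_mul, zero_mul,
        Finset.sum_ite_eq, Finset.mem_univ, if_true]
      rw [Finset.sum_comm]
    rw [key]
    apply Finset.sum_nonneg
    intro k _
    have := (SimpleGraph.posSemidef_lapMatrix ℝ G).dotProduct_mulVec_nonneg (fun i => x (i, k))
    simpa using this
end Kron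


/-- For an invertible `A`, a connected graph `G`, and any initial vector
`𝒳₀` with `aᵢᵀxᵢ(0) = bᵢ` for all `i`, the solution `𝒳(t) = exp(-t·P L̄)·𝒳₀` of the flow
`𝒳̇ = -P L̄ 𝒳` converges exponentially fast to `(x*,…,x*)` where `x* = A⁻¹b`. -/
theorem flow_converges_exponentially
    {n : ℕ} (A : Matrix (Fin n) (Fin n) ℝ) (hA : IsUnit A.det) (b : Fin n → ℝ)
    (G : SimpleGraph (Fin n)) [DecidableRel G.Adj] (hG : G.Connected)
    (X0 : Fin n × Fin n → ℝ)
    (hX0 : ∀ i, A i ⬝ᵥ (fun k => X0 (i, k)) = b i) :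
    ∃ C c : ℝ, 0 ≤ C ∧ 0 < c ∧ ∀ t : ℝ, 0 ≤ t →
      ‖(NormedSpace.exp
            ((-t) • (blockP (fun i => A i) * (G.lapMatrix ℝ ⊗ₖ (1 : Matrix (Fin n) (Fin n) ℝ))))
          *ᵥ X0)
        - (fun p => (A⁻¹ *ᵥ b) p.2)‖ ≤ C * Real.exp (-c * t) := by
  classical
  set L : Matrix (Fin n) (Fin n) ℝ := G.lapMatrix ℝ with hL
  set Lb : Matrix (Fin n × Fin n) (Fin n × Fin n) ℝ := L ⊗ₖ (1 : Matrix (Fin n) (Fin n) ℝ)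
    with hLb
  set a : Fin n → Fin n → ℝ := fun i => A i with ha
  set P := blockP a with hP
  set M := P * Lb with hM
  set S := P * Lb * P with hS
  set xs : Fin n → ℝ := A⁻¹ *ᵥ b with hxs
  set Xs : Fin n × Fin n → ℝ := fun p => xs p.2 with hXs
  set Y0 : Fin n × Fin n → ℝ := X0 - Xs with hY0
  -- rows are nonzero
  have hrow : ∀ i, a i ⬝ᵥ a i ≠ 0 := by
    intro i hzero
    have hai : a i = 0 := dotProduct_self_eq_zero.mp hzero
    have : A.det = 0 := Matrix.det_eq_zero_of_row_eq_zero i (fun j => congrFun hai j)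
    rw [this] at hA
    exact hA.ne_zero rfl
  have hAxs : A *ᵥ xs = b := by
    rw [hxs, Matrix.mulVec_mulVec, Matrix.mul_nonsing_inv A hA, Matrix.one_mulVec]
  -- row sums of the Laplacian vanish
  have hLrow : ∀ i, ∑ j, L i j = 0 := by
    intro i
    have h := congrFun (G.lapMatrix_mulVec_const_eq_zero (R := ℝ)) i
    simpa [Matrix.mulVec, dotProduct, hL] using h
  have hLbXs : Lb *ᵥ Xs = 0 := by
    funext p
    rcases p with ⟨i, k⟩
    have : (Lb *ᵥ Xs) (i, k) = (∑ j, L i j) * xs k := by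
      simp only [hLb, Matrix.mulVec, dotProduct, Fintype.sum_prod_type,
        Matrix.kroneckerMap_apply, Matrix.one_apply, mul_ite, mul_one, mul_zero, ite_mul,
        zero_mul, Finset.sum_ite_eq, Finset.mem_univ, if_true, hXs, Finset.sum_mul]
    rw [this, hLrow i, zero_mul, Pi.zero_apply]
  have hMXs : M *ᵥ Xs = 0 := by
    rw [hM, ← Matrix.mulVec_mulVec, hLbXs, Matrix.mulVec_zero]
  have hPP : P * P = P := blockP_mul_blockP a hrow
  have hPT : Pᵀ = P := blockP_transpose a
  have hPY0 : P *ᵥ Y0 = Y0 := by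
    funext p
    rw [hP, blockP_mulVec]
    have h2 : a p.1 ⬝ᵥ (fun k => Xs (p.1, k)) = b p.1 := by
      have h := congrFun hAxs p.1
      simpa [Matrix.mulVec, hXs, dotProduct, ha] using h
    have horth : a p.1 ⬝ᵥ (fun k => Y0 (p.1, k)) = 0 := by
      have hsub : (fun k => Y0 (p.1, k))
          = (fun k => X0 (p.1, k)) - (fun k => Xs (p.1, k)) := rfl
      rw [hsub, dotProduct_sub, h2, hX0 p.1, sub_self]
    rw [projMat_mulVec_of_orth _ horth]
  -- powers agree on Y0
  have hpow : ∀ k : ℕ, M ^ k *ᵥ Y0 = S ^ k *ᵥ Y0 ∧ P *ᵥ (M ^ k *ᵥ Y0) = M ^ k *ᵥ Y0 := by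
    intro k
    induction k with
    | zero =>
      constructor
      · rfl
      · rw [pow_zero, Matrix.one_mulVec]; exact hPY0
    | succ k ih =>
      obtain ⟨ih1, ih2⟩ := ih
      have hMw : M ^ (k + 1) *ᵥ Y0 = M *ᵥ (M ^ k *ᵥ Y0) := by
        rw [pow_succ', ← Matrix.mulVec_mulVec]
      have hSw : S ^ (k + 1) *ᵥ Y0 = S *ᵥ (M ^ k *ᵥ Y0) := by
        rw [pow_succ', ← Matrix.mulVec_mulVec, ih1]
      have hSM : S = M * P := by rw [hS, hM]
      have hSMw : S *ᵥ (M ^ k *ᵥ Y0) = M *ᵥ (M ^ k *ᵥ Y0) := by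
        rw [hSM, ← Matrix.mulVec_mulVec, ih2]
      have hPM : P *ᵥ (M *ᵥ (M ^ k *ᵥ Y0)) = M *ᵥ (M ^ k *ᵥ Y0) := by
        rw [Matrix.mulVec_mulVec, hM, ← mul_assoc, hPP]
      exact ⟨by rw [hMw, hSw, hSMw], by rw [hMw]; exact hPM⟩
  -- S is positive semidefinite
  have hLbPSD : Lb.PosSemidef := lapKron_posSemidef G
  have hPH : Pᴴ = P := by
    rw [Matrix.conjTranspose_eq_transpose_of_trivial, hPT]
  have hSPSD : S.PosSemidef := by
    have h := hLbPSD.mul_mul_conjTranspose_same P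
    rw [hPH] at h
    exact h
  -- Y0 is orthogonal to the kernel of S
  have hker : ∀ u : Fin n × Fin n → ℝ, S *ᵥ u = 0 → u ⬝ᵥ Y0 = 0 := by
    intro u hu
    have hdotP : ∀ v w : Fin n × Fin n → ℝ, v ⬝ᵥ (P *ᵥ w) = (P *ᵥ v) ⬝ᵥ w := by
      intro v w
      rw [Matrix.dotProduct_mulVec]
      congr 1
      conv_lhs => rw [← hPT]
      rw [Matrix.vecMul_transpose]
    have hPu0 : P *ᵥ u = 0 := by
      have hq : (P *ᵥ u) ⬝ᵥ (Lb *ᵥ (P *ᵥ u)) = 0 := by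
        have h1 : u ⬝ᵥ (S *ᵥ u) = 0 := by rw [hu, dotProduct_zero]
        have h2 : S *ᵥ u = P *ᵥ (Lb *ᵥ (P *ᵥ u)) := by
          rw [hS, Matrix.mulVec_mulVec, Matrix.mulVec_mulVec]
        rw [h2, hdotP] at h1
        exact h1
      have hLbw : Lb *ᵥ (P *ᵥ u) = 0 := by
        have h := (hLbPSD.dotProduct_mulVec_zero_iff (P *ᵥ u))
        apply h.mp
        simpa using hq
      have hconst : ∀ k (i i' : Fin n), (P *ᵥ u) (i, k) = (P *ᵥ u) (i', k) := by
        intro k i i'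
        have hLk : L *ᵥ (fun i0 => (P *ᵥ u) (i0, k)) = 0 := by
          funext i0
          have h := congrFun hLbw (i0, k)
          simpa [hLb, Matrix.mulVec, dotProduct, Fintype.sum_prod_type,
            Matrix.kroneckerMap_apply, Matrix.one_apply, mul_ite, mul_one, mul_zero, ite_mul,
            zero_mul, Finset.sum_ite_eq, Finset.mem_univ, if_true] using h
        have hreach := (G.lapMatrix_mulVec_eq_zero_iff_forall_reachable
          (x := fun i0 => (P *ᵥ u) (i0, k))).mp hLk
        exact hreach i i' (hG.preconnected i i')
      have horth : ∀ i, a i ⬝ᵥ (fun k => (P *ᵥ u) (i, k)) = 0 := by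
        intro i
        have hblk : (fun k => (P *ᵥ u) (i, k)) = projMat (a i) *ᵥ (fun k => u (i, k)) := by
          funext k
          exact blockP_mulVec a u (i, k)
        rw [hblk]
        exact dotProduct_projMat_mulVec (a i) (hrow i) _
      have hnon : Nonempty (Fin n) := hG.nonempty
      obtain ⟨i0⟩ := hnon
      have hAz : A *ᵥ (fun k => (P *ᵥ u) (i0, k)) = 0 := by
        funext i
        have heq : A i ⬝ᵥ (fun k => (P *ᵥ u) (i0, k)) = a i ⬝ᵥ (fun k => (P *ᵥ u) (i, k)) := by
          apply Finset.sum_congr rfl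
          intro k _
          simp only
          rw [hconst k i0 i]
        rw [Pi.zero_apply]
        calc (A *ᵥ fun k => (P *ᵥ u) (i0, k)) i
            = A i ⬝ᵥ (fun k => (P *ᵥ u) (i0, k)) := rfl
          _ = a i ⬝ᵥ (fun k => (P *ᵥ u) (i, k)) := heq
          _ = 0 := horth i
      have hz0 : (fun k => (P *ᵥ u) (i0, k)) = 0 := by
        have h := congrArg (fun v => A⁻¹ *ᵥ v) hAz
        simpa [Matrix.mulVec_mulVec, Matrix.nonsing_inv_mul A hA, Matrix.one_mulVec] using h
      funext p
      rcases p with ⟨i, k⟩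
      rw [Pi.zero_apply, hconst k i i0]
      exact congrFun hz0 k
    have h := hdotP u Y0
    rw [hPY0] at h
    rw [h, hPu0, zero_dotProduct]
  -- apply the decay bound
  obtain ⟨C, c, hC, hc, hbound⟩ := decay_bound hSPSD Y0 hker
  refine ⟨C, c, hC, hc, ?_⟩
  intro t ht
  have hexpY : exp ((-t) • M) *ᵥ Y0 = exp ((-t) • S) *ᵥ Y0 := by
    apply exp_mulVec_congr
    intro k
    rw [smul_pow, smul_pow, Matrix.smul_mulVec, Matrix.smul_mulVec, (hpow k).1]
  have hexpXs : exp ((-t) • M) *ᵥ Xs = Xs := by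
    have h0 : exp ((-t) • M) *ᵥ Xs = exp (0 : Matrix (Fin n × Fin n) (Fin n × Fin n) ℝ)
        *ᵥ Xs := by
      apply exp_mulVec_congr
      intro k
      cases k with
      | zero => rw [pow_zero, pow_zero]
      | succ k =>
        have hMk : M ^ (k + 1) *ᵥ Xs = 0 := by
          rw [pow_succ, ← Matrix.mulVec_mulVec, hMXs, Matrix.mulVec_zero]
        rw [smul_pow, Matrix.smul_mulVec, hMk, smul_zero,
          zero_pow (Nat.succ_ne_zero k), Matrix.zero_mulVec]
    rw [h0, exp_zero, Matrix.one_mulVec]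
  have hsplit : exp ((-t) • M) *ᵥ X0 - Xs = exp ((-t) • S) *ᵥ Y0 := by
    have hX0eq : X0 = Y0 + Xs := by rw [hY0, sub_add_cancel]
    rw [hX0eq, Matrix.mulVec_add, hexpY, hexpXs, add_sub_cancel_right]
  rw [hsplit]
  rw [pi_norm_le_iff_of_nonneg (mul_nonneg hC (Real.exp_pos _).le)]
  intro p
  rw [Real.norm_eq_abs]
  exact hbound t ht p
end BlockLemmas
end

section
/- Let P be a real n²×n² idempotent matrix (P² = P) and let L̄ be any real n²×n² matrix. Then the characteristic polynomial of P L̄ + I − P equals the characteristic polynomial of P L̄ P + I − P; in particular P L̄ + I − P and P L̄ P + I − P have the same eigenvalues. -/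
open Polynomial Matrix

section Aux

variable {m : Type*} [Fintype m] [DecidableEq m]

/-- Over a field, `AB` and `BA` have the same characteristic polynomial. -/
lemma my_charpoly_mul_comm {K : Type*} [Field K] (A B : Matrix m m K) :
    (A * B).charpoly = (B * A).charpoly := by
  classical
  set χ : Matrix m m K[X] := Matrix.scalar m X with hχ
  set A' := A.map (C : K →+* K[X]) with hA'
  set B' := B.map (C : K →+* K[X]) with hB'
  have hcomm : ∀ M : Matrix m m K[X], χ * M = M * χ := fun M =>
    (Matrix.scalar_commute X (fun r => Commute.all _ _) M)
  have hE : fromBlocks 1 (-A') 0 χ * fromBlocks χ A' B' 1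
      = fromBlocks (χ - A' * B') 0 (χ * B') χ := by
    rw [fromBlocks_multiply]
    congr 1 <;> simp [sub_eq_add_neg, Matrix.neg_mul]
  have hE' : fromBlocks χ A' B' 1 * fromBlocks 1 (-A') 0 χ
      = fromBlocks χ 0 B' (χ - B' * A') := by
    rw [fromBlocks_multiply]
    congr 1 <;> simp [hcomm A', sub_eq_add_neg, Matrix.mul_neg, add_comm]
  have hdet : (fromBlocks 1 (-A') 0 χ * fromBlocks χ A' B' 1).det
      = (fromBlocks χ A' B' 1 * fromBlocks 1 (-A') 0 χ).det := by
    rw [det_mul, det_mul, mul_comm]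
  rw [hE, hE', det_fromBlocks_zero₁₂, det_fromBlocks_zero₁₂] at hdet
  have hcm1 : charmatrix (A * B) = χ - A' * B' := by
    simp [charmatrix, RingHom.mapMatrix_apply, Matrix.map_mul, hχ, scalar_apply, hA', hB']
  have hcm2 : charmatrix (B * A) = χ - B' * A' := by
    simp [charmatrix, RingHom.mapMatrix_apply, Matrix.map_mul, hχ, scalar_apply, hA', hB']
  have hX : (χ.det : K[X]) ≠ 0 := by
    rw [hχ, scalar_apply, det_diagonal]
    simp [X_ne_zero]
  unfold Matrix.charpoly
  rw [hcm1, hcm2]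
  have := hdet
  rw [mul_comm χ.det _] at this
  exact mul_right_cancel₀ hX this

/-- Shifting a matrix by the identity composes the characteristic polynomial with `X - 1`. -/
lemma my_charpoly_add_one {R : Type*} [CommRing R] (M : Matrix m m R) :
    (M + 1).charpoly = M.charpoly.comp (X - 1) := by
  classical
  have hφ : charmatrix (M + 1) = (charmatrix M).map (eval₂RingHom C (X - 1 : R[X])) := by
    ext i j
    by_cases h : i = j
    · subst h
      simp [charmatrix_apply_eq, Matrix.add_apply, Matrix.one_apply_eq, map_sub, C_add,
        sub_sub, add_comm]
    · simp [charmatrix_apply_ne _ _ _ h, Matrix.add_apply, Matrix.one_apply_ne h]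
  have := (eval₂RingHom C (X - 1 : R[X])).map_det (charmatrix M)
  rw [RingHom.mapMatrix_apply] at this
  rw [Matrix.charpoly, hφ, ← this]
  rfl

end Aux

/-- If `P` is an idempotent real `n²×n²` matrix and `L̄` is any real `n²×n²`
matrix, then `P L̄ + I - P` and `P L̄ P + I - P` have the same characteristic polynomial,
and hence the same (complex) eigenvalues. -/
theorem charpoly_proj_shift {n : ℕ}
    (P Lbar : Matrix (Fin (n ^ 2)) (Fin (n ^ 2)) ℝ) (hP : P * P = P) :
    (P * Lbar + 1 - P).charpoly = (P * Lbar * P + 1 - P).charpoly ∧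
    ∀ μ : ℂ,
      (((P * Lbar + 1 - P).map (algebraMap ℝ ℂ)).charpoly.IsRoot μ ↔
        ((P * Lbar * P + 1 - P).map (algebraMap ℝ ℂ)).charpoly.IsRoot μ) := by
  have hbase : (P * (Lbar - 1)).charpoly = (P * (Lbar - 1) * P).charpoly := by
    rw [my_charpoly_mul_comm (P * (Lbar - 1)) P, ← mul_assoc P P, hP]
  have e1 : P * Lbar + 1 - P = P * (Lbar - 1) + 1 := by noncomm_ring
  have e2 : P * Lbar * P + 1 - P = P * (Lbar - 1) * P + 1 := by
    have : P * (Lbar - 1) * P = P * Lbar * P - P := by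
      rw [Matrix.mul_sub, mul_one, Matrix.sub_mul, hP]
    rw [this]; noncomm_ring
  have h : (P * Lbar + 1 - P).charpoly = (P * Lbar * P + 1 - P).charpoly := by
    rw [e1, e2, my_charpoly_add_one, my_charpoly_add_one, hbase]
  refine ⟨h, fun μ => ?_⟩
  rw [Matrix.charpoly_map, Matrix.charpoly_map, h]
end

section
/- Let a₁,…,aₙ be nonzero vectors in ℝⁿ, let G be an undirected simple graph on n vertices with Laplacian L, let Pᵢ = I − aᵢaᵢᵀ/(aᵢᵀaᵢ), P = diag(P₁,…,Pₙ), and L̄ = L ⊗ Iₙ. Then the characteristic polynomial of P L̄ equals the characteristic polynomial of the symmetric positive semidefinite matrix P L̄ P; consequently every complex eigenvalue of P L̄ is real and nonnegative. -/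
open Matrix Polynomial
open scoped Kronecker ComplexOrder


section aux
variable {N : Type*} [Fintype N] [DecidableEq N]

lemma myEval_charpoly {R : Type*} [CommRing R] (M : Matrix N N R) (x : R) :
    M.charpoly.eval x = (x • (1 : Matrix N N R) - M).det := by
  rw [Matrix.charpoly, ← Polynomial.coe_evalRingHom, RingHom.map_det]
  congr 1
  ext i j
  simp only [RingHom.mapMatrix_apply, Matrix.map_apply, charmatrix_apply, Matrix.sub_apply,
    Matrix.diagonal_apply, Matrix.smul_apply, Matrix.one_apply, coe_evalRingHom, eval_sub,
    eval_C, smul_eq_mul]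
  split_ifs <;> simp

lemma myCharpoly_mul_comm (A B : Matrix N N ℝ) :
    (A * B).charpoly = (B * A).charpoly := by
  apply Polynomial.funext
  intro x
  rw [myEval_charpoly, myEval_charpoly]
  rcases eq_or_ne x 0 with rfl | hx
  · simp only [zero_smul, zero_sub, det_neg]
    rw [det_mul_comm]
  · have h1 : x • (1 : Matrix N N ℝ) - A * B = x • ((1 : Matrix N N ℝ) - (x⁻¹ • A) * B) := by
      rw [smul_sub, Matrix.smul_mul, smul_smul, mul_inv_cancel₀ hx, one_smul]
    have h2 : x • (1 : Matrix N N ℝ) - B * A = x • ((1 : Matrix N N ℝ) - B * (x⁻¹ • A)) := by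
      rw [smul_sub, Matrix.mul_smul, smul_smul, mul_inv_cancel₀ hx, one_smul]
    rw [h1, h2, det_smul, det_smul, det_one_sub_mul_comm]
end aux

section proj
variable {n : ℕ}

lemma projMat_isSymm (a : Fin n → ℝ) : (projMat a).IsSymm := by
  unfold projMat
  rw [Matrix.IsSymm]
  ext i j
  simp [Matrix.transpose_apply, Matrix.one_apply, vecMulVec_apply, mul_comm, eq_comm]

lemma projMat_idem (a : Fin n → ℝ) (ha : a ≠ 0) : projMat a * projMat a = projMat a := by
  have hd : a ⬝ᵥ a ≠ 0 := fun h => ha (dotProduct_self_eq_zero.mp h)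
  have hVV : vecMulVec a a * vecMulVec a a = (a ⬝ᵥ a) • vecMulVec a a := by
    ext i j
    simp only [Matrix.mul_apply, vecMulVec_apply, Matrix.smul_apply, smul_eq_mul, dotProduct]
    rw [Finset.sum_mul]
    apply Finset.sum_congr rfl; intro k _; ring
  unfold projMat
  rw [sub_mul, one_mul, mul_sub, mul_one, Matrix.smul_mul, Matrix.mul_smul, smul_smul, hVV,
    smul_smul]
  rw [mul_assoc, inv_mul_cancel₀ hd, mul_one]
  abel

lemma blockP_mul_blockP_s11 {m : ℕ} (a : Fin m → Fin n → ℝ) (ha : ∀ i, a i ≠ 0) :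
    blockP a * blockP a = blockP a := by
  ext ⟨i, k⟩ ⟨j, l⟩
  simp only [blockP, Matrix.mul_apply, Matrix.of_apply, Fintype.sum_prod_type]
  rw [Finset.sum_eq_single i]
  · by_cases h : i = j
    · subst h
      simp only [if_pos rfl, if_true]
      rw [← Matrix.mul_apply, projMat_idem (a i) (ha i)]
    · simp [h]
  · intro b _ hb
    simp [hb.symm]
  · simp

lemma blockP_isSymm {m : ℕ} (a : Fin m → Fin n → ℝ) : (blockP a).IsSymm := by
  rw [Matrix.IsSymm]
  ext ⟨i, k⟩ ⟨j, l⟩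
  simp only [blockP, Matrix.transpose_apply, Matrix.of_apply]
  rcases eq_or_ne i j with rfl | h
  · simpa using (projMat_isSymm (a i)).apply k l
  · simp [h, Ne.symm h]
end proj

section kron
lemma myPsd_eq {N : Type*} [Fintype N] [DecidableEq N] {A : Matrix N N ℝ} (hA : A.PosSemidef) :
    ∃ B : Matrix N N ℝ, A = Bᴴ * B := by
  open scoped MatrixOrder Matrix.Norms.L2Operator in
  obtain ⟨B, rfl⟩ := CStarAlgebra.nonneg_iff_eq_star_mul_self.mp hA.nonneg
  exact ⟨B, rfl⟩

lemma kron_one_posSemidef {m n : ℕ} {A : Matrix (Fin m) (Fin m) ℝ} (hA : A.PosSemidef) :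
    (A ⊗ₖ (1 : Matrix (Fin n) (Fin n) ℝ)).PosSemidef := by
  obtain ⟨B, hB⟩ := myPsd_eq hA
  have h1 : A ⊗ₖ (1 : Matrix (Fin n) (Fin n) ℝ)
      = (B ⊗ₖ (1 : Matrix (Fin n) (Fin n) ℝ))ᴴ * (B ⊗ₖ (1 : Matrix (Fin n) (Fin n) ℝ)) := by
    rw [hB, Matrix.conjTranspose_eq_transpose_of_trivial,
      Matrix.conjTranspose_eq_transpose_of_trivial, ← Matrix.kroneckerMap_transpose,
      Matrix.transpose_one, ← Matrix.mul_kronecker_mul, Matrix.one_mul]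
  rw [h1]
  exact Matrix.posSemidef_conjTranspose_mul_self _

lemma map_conjTranspose_real {N : Type*} [Fintype N] (B : Matrix N N ℝ) :
    (B.map (algebraMap ℝ ℂ))ᴴ = Bᵀ.map (algebraMap ℝ ℂ) := by
  ext i j
  simp [Matrix.conjTranspose_apply, Matrix.map_apply, Matrix.transpose_apply,
    Complex.conj_ofReal]

lemma posSemidef_map_real {N : Type*} [Fintype N] [DecidableEq N] {S : Matrix N N ℝ}
    (hS : S.PosSemidef) : (S.map (algebraMap ℝ ℂ)).PosSemidef := by
  obtain ⟨B, hB⟩ := myPsd_eq hS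
  have : S.map (algebraMap ℝ ℂ)
      = (B.map (algebraMap ℝ ℂ))ᴴ * (B.map (algebraMap ℝ ℂ)) := by
    rw [map_conjTranspose_real, hB, Matrix.conjTranspose_eq_transpose_of_trivial,
      Matrix.map_mul]
  rw [this]
  exact Matrix.posSemidef_conjTranspose_mul_self _
end kron

/-- For nonzero `a₁,…,aₙ` and any simple graph `G` on `n` vertices, the
characteristic polynomial of `P L̄` equals that of the symmetric positive semidefinite matrix
`P L̄ P`; consequently every complex eigenvalue of `P L̄` is real and nonnegative. -/
theorem charpoly_PL_eq_PLP
    {n : ℕ} (a : Fin n → Fin n → ℝ) (ha : ∀ i, a i ≠ 0)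
    (G : SimpleGraph (Fin n)) [DecidableRel G.Adj] :
    (blockP a * (G.lapMatrix ℝ ⊗ₖ (1 : Matrix (Fin n) (Fin n) ℝ))).charpoly =
      (blockP a * (G.lapMatrix ℝ ⊗ₖ (1 : Matrix (Fin n) (Fin n) ℝ)) * blockP a).charpoly ∧
    ((blockP a * (G.lapMatrix ℝ ⊗ₖ (1 : Matrix (Fin n) (Fin n) ℝ))
        * blockP a).IsSymm ∧
      (blockP a * (G.lapMatrix ℝ ⊗ₖ (1 : Matrix (Fin n) (Fin n) ℝ))
        * blockP a).PosSemidef) ∧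
    ∀ μ : ℂ,
      ((blockP a * (G.lapMatrix ℝ ⊗ₖ (1 : Matrix (Fin n) (Fin n) ℝ))).map
        (algebraMap ℝ ℂ)).charpoly.IsRoot μ →
      μ.im = 0 ∧ 0 ≤ μ.re := by
  set P : Matrix (Fin n × Fin n) (Fin n × Fin n) ℝ := blockP a with hP
  set Lb : Matrix (Fin n × Fin n) (Fin n × Fin n) ℝ :=
    G.lapMatrix ℝ ⊗ₖ (1 : Matrix (Fin n) (Fin n) ℝ) with hLb
  have hL : Lb.PosSemidef := kron_one_posSemidef (SimpleGraph.posSemidef_lapMatrix ℝ G)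
  have hPP : P * P = P := blockP_mul_blockP_s11 a ha
  have hPH : Pᴴ = P := by
    rw [Matrix.conjTranspose_eq_transpose_of_trivial]; exact blockP_isSymm a
  have hS_psd : (P * Lb * P).PosSemidef := by
    have h := hL.conjTranspose_mul_mul_same P
    rwa [hPH] at h
  have hcp : (P * Lb).charpoly = (P * Lb * P).charpoly := by
    calc (P * Lb).charpoly = (P * (P * Lb)).charpoly := by rw [← Matrix.mul_assoc, hPP]
    _ = ((P * Lb) * P).charpoly := myCharpoly_mul_comm _ _
  refine ⟨hcp, ⟨?_, hS_psd⟩, ?_⟩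
  · rw [Matrix.IsSymm, ← Matrix.conjTranspose_eq_transpose_of_trivial]
    exact hS_psd.1
  · intro μ hμ
    rw [Matrix.charpoly_map, hcp, ← Matrix.charpoly_map] at hμ
    set S' : Matrix (Fin n × Fin n) (Fin n × Fin n) ℂ :=
      (P * Lb * P).map (algebraMap ℝ ℂ) with hS'def
    have hS' : S'.PosSemidef := posSemidef_map_real hS_psd
    have hdet : (μ • (1 : Matrix (Fin n × Fin n) (Fin n × Fin n) ℂ) - S').det = 0 := by
      rw [← myEval_charpoly]; exact hμ
    obtain ⟨v, hv0, hveq⟩ := (Matrix.exists_mulVec_eq_zero_iff).mpr hdet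
    have hMv : S' *ᵥ v = μ • v := by
      have h := hveq
      rw [Matrix.sub_mulVec, Matrix.smul_mulVec, Matrix.one_mulVec, sub_eq_zero] at h
      exact h.symm
    have hpos := hS'.dotProduct_mulVec_nonneg v
    rw [hMv, dotProduct_smul, smul_eq_mul] at hpos
    have hc : 0 < dotProduct (star v) v := by
      rw [dotProduct_comm]
      exact dotProduct_self_star_pos_iff.mpr hv0
    set c := dotProduct (star v) v with hcdef
    obtain ⟨hcre, hcim⟩ : 0 < c.re ∧ c.im = 0 := by
      rw [Complex.lt_def] at hc
      exact ⟨by simpa using hc.1, by simpa using hc.2.symm⟩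
    rw [Complex.le_def] at hpos
    obtain ⟨hre, him⟩ := hpos
    rw [Complex.mul_im, hcim, mul_zero, zero_add] at him
    have hμim : μ.im = 0 := by
      by_contra h
      exact h (by
        have := mul_eq_zero.mp him.symm
        rcases this with h1 | h1
        · exact h1
        · exact absurd h1 (ne_of_gt hcre))
    refine ⟨hμim, ?_⟩
    rw [Complex.mul_re, hcim, mul_zero, sub_zero] at hre
    simp only [Complex.zero_re] at hre
    exact nonneg_of_mul_nonneg_right (by rw [mul_comm] at hre; exact hre) hcre
end
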